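/- Let α > 1, K ≥ 1 an integer, i ∈ {1,…,K}, and λ ∈ ℝ^K. Let r = (r_1,…,r_K) be a random vector whose components are i.i.d. Pareto with shape α (density α x^{-(α+1)} on [1,∞)). Then the probability that λ_i − r_i < λ_j − r_j for all j ≠ i equals ∫_1^∞ α (z+λ̲_i)^{-(α+1)} ∏_{j≠i} (1 − (z+λ̲_j)^{-α}) dz, where λ̲ := λ − (min_j λ_j)·𝟏. -/

import Mathlib

open MeasureTheory ProbabilityTheory Set
open scoped ENNReal

lemma pareto_Iio_of_le {α y : ℝ} (hy : y ≤ 1) : paretoMeasure 1 α (Set.Iio y) = 0 := by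
  rw [paretoMeasure, withDensity_apply _ measurableSet_Iio]
  exact lintegral_paretoPDF_of_le hy

lemma pareto_Iio_of_ge {α : ℝ} (hα : 0 < α) {y : ℝ} (hy : 1 ≤ y) :
    paretoMeasure 1 α (Set.Iio y) = ENNReal.ofReal (1 - y ^ (-α)) := by
  rw [paretoMeasure, withDensity_apply _ measurableSet_Iio,
    ← Set.Iio_union_Ico_eq_Iio hy,
    lintegral_union measurableSet_Ico ((Set.Iio_disjoint_Ici le_rfl).mono_right Set.Ico_subset_Ici_self),
    lintegral_paretoPDF_of_le le_rfl, zero_add]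
  have h1 : ∫⁻ x in Ico 1 y, paretoPDF 1 α x
      = ∫⁻ x in Ico 1 y, ENNReal.ofReal (α * x ^ (-(α + 1))) := by
    refine setLIntegral_congr_fun measurableSet_Ico (fun x hx => ?_)
    rw [paretoPDF_of_le hx.1, Real.one_rpow, mul_one]
  rw [h1]
  have hint : IntegrableOn (fun x : ℝ => α * x ^ (-(α + 1))) (Ico 1 y) := by
    refine (ContinuousOn.integrableOn_compact isCompact_Icc ?_).mono_set Ico_subset_Icc_self
    exact continuousOn_const.mul (ContinuousOn.rpow_const continuousOn_id
      (fun x hx => Or.inl (by linarith [hx.1] : x ≠ 0)))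
  rw [← ofReal_integral_eq_lintegral_ofReal hint
    (((ae_restrict_mem measurableSet_Ico)).mono fun x hx =>
      mul_nonneg hα.le (Real.rpow_nonneg (by linarith [hx.1]) _))]
  congr 1
  rw [integral_Ico_eq_integral_Ioo, ← integral_Ioc_eq_integral_Ioo,
    ← intervalIntegral.integral_of_le hy, intervalIntegral.integral_const_mul,
    integral_rpow (Or.inr ⟨by intro h; nlinarith, by
      rw [Set.uIcc_of_le hy]; intro h; exact absurd h.1 (by norm_num)⟩)]
  have he : -(α + 1) + 1 = -α := by ring
  rw [he, Real.one_rpow]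
  have hα' : α ≠ 0 := ne_of_gt hα
  rw [mul_div_assoc', mul_comm, mul_div_assoc, div_neg, div_self hα']
  ring

lemma prod_succAbove' {M : Type*} [CommMonoid M] {n : ℕ} (i : Fin (n + 1)) (f : Fin (n + 1) → M) :
    ∏ k : Fin n, f (i.succAbove k) = ∏ j ∈ Finset.univ.erase i, f j := by
  refine Finset.prod_nbij i.succAbove
    (fun k _ => Finset.mem_erase.2 ⟨Fin.succAbove_ne i k, Finset.mem_univ _⟩)
    (fun a _ b _ h => Fin.succAbove_right_injective h)
    (fun j hj => ?_) (fun _ _ => rfl)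
  simp only [Finset.coe_erase, Set.mem_diff, Finset.coe_univ, Set.mem_univ, true_and,
    Set.mem_singleton_iff] at hj
  obtain ⟨k, hk⟩ := Fin.exists_succAbove_eq hj
  exact ⟨k, by simp, hk⟩

/-- the FTPL arm-selection probability under i.i.d. Pareto(α) perturbations
equals the integral formula. -/
theorem ftpl_pareto_selection_prob
    (α : ℝ) (hα : 1 < α) (K : ℕ) (hK : 1 ≤ K) (i : Fin K) (lam : Fin K → ℝ) :
    (Measure.pi fun _ : Fin K => paretoMeasure 1 α)
        {r : Fin K → ℝ | ∀ j, j ≠ i → lam i - r i < lam j - r j}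
      = ENNReal.ofReal
          (∫ z in Set.Ioi (1 : ℝ),
            α * (z + (lam i - ⨅ j, lam j)) ^ (-(α + 1)) *
              ∏ j ∈ Finset.univ.erase i,
                (1 - (z + (lam j - ⨅ j, lam j)) ^ (-α))) := by
  obtain ⟨n, rfl⟩ : ∃ n, K = n + 1 := ⟨K - 1, (Nat.succ_pred_eq_of_pos hK).symm⟩
  have hα0 : 0 < α := one_pos.trans hα
  set μ := paretoMeasure 1 α with hμ
  have hprob : IsProbabilityMeasure μ := isProbabilityMeasure_paretoMeasure one_pos hα0
  set m := ⨅ j, lam j with hm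
  have hbdd : BddBelow (Set.range lam) := (Set.finite_range lam).bddBelow
  have hmle : ∀ j, m ≤ lam j := fun j => ciInf_le hbdd j
  obtain ⟨j₀, hj₀⟩ := Finite.exists_min lam
  have hmj₀ : lam j₀ = m := le_antisymm (le_ciInf hj₀) (hmle j₀)
  set G : ℝ → ℝ≥0∞ := fun x => ∏ j ∈ Finset.univ.erase i, μ (Set.Iio (x + (lam j - lam i)))
    with hG
  have hGm : Measurable G := by
    refine Finset.measurable_prod _ fun j _ => ?_
    have hmono : Monotone fun x : ℝ => μ (Set.Iio (x + (lam j - lam i))) :=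
      fun u v huv => measure_mono (Set.Iio_subset_Iio (by linarith))
    exact hmono.measurable
  have hpdfm : Measurable (paretoPDF 1 α) := (measurable_paretoPDFReal 1 α).ennreal_ofReal
  have hT : MeasurableSet {p : ℝ × (Fin n → ℝ) |
      ∀ k, p.2 k < p.1 + (lam (i.succAbove k) - lam i)} := by
    rw [Set.setOf_forall]
    refine MeasurableSet.iInter fun k => measurableSet_lt ?_ ?_
    · exact (measurable_pi_apply k).comp measurable_snd
    · exact measurable_fst.add_const _
  have hpos : ∀ z : ℝ, 1 < z → 0 ≤ α * (z + (lam i - m)) ^ (-(α + 1)) *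
      ∏ j ∈ Finset.univ.erase i, (1 - (z + (lam j - m)) ^ (-α)) := by
    intro z hz
    refine mul_nonneg (mul_nonneg hα0.le (Real.rpow_nonneg (by linarith [hmle i]) _))
      (Finset.prod_nonneg fun j _ => sub_nonneg.2 ?_)
    exact Real.rpow_le_one_of_one_le_of_nonpos (by linarith [hmle j]) (by linarith)
  calc (Measure.pi fun _ : Fin (n + 1) => μ)
        {r : Fin (n + 1) → ℝ | ∀ j, j ≠ i → lam i - r i < lam j - r j}
      = (μ.prod (Measure.pi fun _ : Fin n => μ))
          {p : ℝ × (Fin n → ℝ) | ∀ k, p.2 k < p.1 + (lam (i.succAbove k) - lam i)} := by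
        rw [show {r : Fin (n + 1) → ℝ | ∀ j, j ≠ i → lam i - r i < lam j - r j}
            = (MeasurableEquiv.piFinSuccAbove (fun _ => ℝ) i) ⁻¹'
              {p : ℝ × (Fin n → ℝ) | ∀ k, p.2 k < p.1 + (lam (i.succAbove k) - lam i)} from ?_]
        · exact (measurePreserving_piFinSuccAbove (fun _ => μ) i).measure_preimage_equiv _
        · ext r
          simp only [Set.mem_setOf_eq, Set.mem_preimage, MeasurableEquiv.piFinSuccAbove_apply,
            Fin.insertNthEquiv_symm_apply, Fin.removeNth]
          constructor
          · intro h k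
            have := h (i.succAbove k) (Fin.succAbove_ne i k)
            linarith
          · intro h j hj
            obtain ⟨k, rfl⟩ := Fin.exists_succAbove_eq hj
            have := h k
            linarith
    _ = ∫⁻ x, G x ∂μ := by
        rw [Measure.prod_apply hT]
        refine lintegral_congr fun x => ?_
        have hpre : Prod.mk x ⁻¹' {p : ℝ × (Fin n → ℝ) |
            ∀ k, p.2 k < p.1 + (lam (i.succAbove k) - lam i)}
            = Set.pi Set.univ fun k => Set.Iio (x + (lam (i.succAbove k) - lam i)) := by
          ext s
          simp [Set.mem_univ_pi]
        rw [hpre, Measure.pi_pi]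
        exact prod_succAbove' i fun j => μ (Set.Iio (x + (lam j - lam i)))
    _ = ∫⁻ x, paretoPDF 1 α x * G x := by
        rw [hμ, paretoMeasure, lintegral_withDensity_eq_lintegral_mul _ hpdfm hGm]
        rfl
    _ = ∫⁻ x in Set.Ioi (1 : ℝ), paretoPDF 1 α x * G x := by
        rw [← lintegral_add_compl (fun x => paretoPDF 1 α x * G x)
          (measurableSet_Ici (a := (1 : ℝ)))]
        have h0 : ∫⁻ x in (Set.Ici (1 : ℝ))ᶜ, paretoPDF 1 α x * G x = 0 := by
          rw [Set.compl_Ici,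
            setLIntegral_congr_fun measurableSet_Iio (fun x (hx : x < 1) => by
              rw [paretoPDF_of_lt hx, zero_mul])]
          simp
        rw [h0, add_zero]
        exact (setLIntegral_congr Ioi_ae_eq_Ici).symm
    _ = ∫⁻ x in Set.Ioi (1 + (lam i - m)), paretoPDF 1 α x * G x := by
        rw [← Set.Ioc_union_Ioi_eq_Ioi (by linarith [hmle i] : (1:ℝ) ≤ 1 + (lam i - m)),
          lintegral_union measurableSet_Ioi Set.Ioc_disjoint_Ioi_same]
        have h0 : ∫⁻ x in Set.Ioc 1 (1 + (lam i - m)), paretoPDF 1 α x * G x = 0 := by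
          have hz : ∀ x ∈ Set.Ioc 1 (1 + (lam i - m)), paretoPDF 1 α x * G x = 0 := by
            intro x hx
            have hx1 : 1 < x := hx.1
            have hne : j₀ ≠ i := by
              intro h
              have h2 := hx.2
              rw [h] at hmj₀
              rw [hmj₀] at h2
              linarith
            have hzz : μ (Set.Iio (x + (lam j₀ - lam i))) = 0 := by
              rw [hμ]
              apply pareto_Iio_of_le
              rw [hmj₀]
              linarith [hx.2]
            have : G x = 0 :=
              Finset.prod_eq_zero (Finset.mem_erase.2 ⟨hne, Finset.mem_univ _⟩) hzz
            rw [this, mul_zero]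
          rw [setLIntegral_congr_fun measurableSet_Ioc hz]
          simp
        rw [h0, zero_add]
    _ = ∫⁻ z in Set.Ioi (1 : ℝ),
          paretoPDF 1 α (z + (lam i - m)) * G (z + (lam i - m)) := by
        have hmp := measurePreserving_add_right (volume : Measure ℝ) (lam i - m)
        have hemb : MeasurableEmbedding (fun z : ℝ => z + (lam i - m)) :=
          (MeasurableEquiv.addRight (lam i - m)).measurableEmbedding
        have h := hmp.setLIntegral_comp_preimage_emb hemb
          (fun x => paretoPDF 1 α x * G x) (Set.Ioi (1 + (lam i - m)))
        have hpre : (fun z : ℝ => z + (lam i - m)) ⁻¹' Set.Ioi (1 + (lam i - m))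
            = Set.Ioi (1 : ℝ) := by
          ext z
          simp only [Set.mem_preimage, Set.mem_Ioi]
          constructor <;> intro <;> linarith
        rw [hpre] at h
        exact h.symm
    _ = ∫⁻ z in Set.Ioi (1 : ℝ),
          ENNReal.ofReal (α * (z + (lam i - m)) ^ (-(α + 1)) *
            ∏ j ∈ Finset.univ.erase i, (1 - (z + (lam j - m)) ^ (-α))) := by
        refine setLIntegral_congr_fun measurableSet_Ioi (fun z hz => ?_)
        have hz1 : (1 : ℝ) < z := hz
        have h1 : (1 : ℝ) ≤ z + (lam i - m) := by linarith [hmle i]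
        simp only [hG]
        rw [paretoPDF_of_le h1, Real.one_rpow, mul_one]
        have hfac : ∀ j ∈ Finset.univ.erase i,
            μ (Set.Iio (z + (lam i - m) + (lam j - lam i)))
              = ENNReal.ofReal (1 - (z + (lam j - m)) ^ (-α)) := by
          intro j _
          have he : z + (lam i - m) + (lam j - lam i) = z + (lam j - m) := by ring
          rw [he, hμ]
          exact pareto_Iio_of_ge hα0 (by linarith [hmle j])
        rw [Finset.prod_congr rfl hfac,
          ← ENNReal.ofReal_prod_of_nonneg (fun j _ => sub_nonneg.2
            (Real.rpow_le_one_of_one_le_of_nonpos (by linarith [hmle j]) (by linarith))),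
          ← ENNReal.ofReal_mul
            (mul_nonneg hα0.le (Real.rpow_nonneg (by linarith [hmle i]) _))]
    _ = ENNReal.ofReal
          (∫ z in Set.Ioi (1 : ℝ),
            α * (z + (lam i - m)) ^ (-(α + 1)) *
              ∏ j ∈ Finset.univ.erase i, (1 - (z + (lam j - m)) ^ (-α))) := by
        have hg : IntegrableOn (fun z : ℝ => α * z ^ (-(α + 1))) (Set.Ioi 1) :=
          (integrableOn_Ioi_rpow_of_lt (by linarith) one_pos).const_mul α
        have hmeas : Measurable fun z : ℝ => α * (z + (lam i - m)) ^ (-(α + 1)) *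
            ∏ j ∈ Finset.univ.erase i, (1 - (z + (lam j - m)) ^ (-α)) := by
          refine Measurable.mul ?_ ?_
          · exact measurable_const.mul ((measurable_id.add_const _).pow_const _)
          · exact Finset.measurable_prod _ fun j _ =>
              measurable_const.sub ((measurable_id.add_const _).pow_const _)
        have hint : IntegrableOn (fun z : ℝ => α * (z + (lam i - m)) ^ (-(α + 1)) *
            ∏ j ∈ Finset.univ.erase i, (1 - (z + (lam j - m)) ^ (-α))) (Set.Ioi 1) := by
          refine Integrable.mono' hg hmeas.aestronglyMeasurable ?_
          refine (ae_restrict_mem measurableSet_Ioi).mono fun z hz => ?_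
          have hz1 : (1 : ℝ) < z := hz
          rw [Real.norm_eq_abs, abs_of_nonneg (hpos z hz1)]
          have hP1 : ∏ j ∈ Finset.univ.erase i, (1 - (z + (lam j - m)) ^ (-α)) ≤ 1 :=
            Finset.prod_le_one
              (fun j _ => sub_nonneg.2 (Real.rpow_le_one_of_one_le_of_nonpos
                (by linarith [hmle j]) (by linarith)))
              (fun j _ => by
                have := Real.rpow_nonneg
                  (by linarith [hmle j] : (0:ℝ) ≤ z + (lam j - m)) (-α)
                linarith)
          calc α * (z + (lam i - m)) ^ (-(α + 1)) *
                ∏ j ∈ Finset.univ.erase i, (1 - (z + (lam j - m)) ^ (-α))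
              ≤ α * (z + (lam i - m)) ^ (-(α + 1)) :=
                mul_le_of_le_one_right
                  (mul_nonneg hα0.le (Real.rpow_nonneg (by linarith [hmle i]) _)) hP1
            _ ≤ α * z ^ (-(α + 1)) := by
                refine mul_le_mul_of_nonneg_left ?_ hα0.le
                exact Real.rpow_le_rpow_of_nonpos (by linarith)
                  (by linarith [hmle i]) (by linarith)
        rw [← ofReal_integral_eq_lintegral_ofReal hint
          ((ae_restrict_mem measurableSet_Ioi).mono fun z hz => hpos z hz)]
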